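/- Let m ≥ 2 and let H be a normalized symmetric real Hadamard matrix of order 4m. Let ε ∈ {1, −1} and set b = −1 + 1/(2m−2) + ε·i·√(4m−5)/(2m−2). Define the (4m−1)×(4m−1) matrix V, indexed by 2 ≤ i,j ≤ 4m (i.e., the first row and column of H are discarded), by: V_ij = 1 if i ≠ j and H_ij = 1; V_ij = b if i ≠ j and H_ij = −1; V_ii = −b if H_ii = 1; V_ii = −1 if H_ii = −1. Then V is a complex Hadamard matrix of order 4m−1. -/

import Mathlib

open Matrix

/-- `H` is a complex Hadamard matrix: unimodular entries and `H Hᴴ = n • I`. -/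
def IsCHadamard {n : Type*} [Fintype n] [DecidableEq n] (H : Matrix n n ℂ) : Prop :=
  (∀ i j, ‖H i j‖ = 1) ∧
    H * H.conjTranspose = (Fintype.card n : ℂ) • 1

/-- `H` is a real Hadamard matrix of order `n`: `±1` entries with `H Hᵀ = n I`. -/
def IsRealHadamard {n : ℕ} (H : Matrix (Fin n) (Fin n) ℝ) : Prop :=
  (∀ i j, H i j = 1 ∨ H i j = -1) ∧ H * H.transpose = (n : ℝ) • 1

/-- A real Hadamard matrix is normalized if its first row and column consist of `1`s. -/
def IsNormalizedRH {n : ℕ} [NeZero n] (H : Matrix (Fin n) (Fin n) ℝ) : Prop :=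
  (∀ j, H 0 j = 1) ∧ (∀ i, H i 0 = 1)

lemma aux_sum' {N : ℕ} [NeZero N] {M : Type*} [AddCommGroup M] (g : Fin N → M)
    (e : Fin (N - 1) → Fin N)
    (he : ∀ i, e i = Fin.cast (by have := Nat.pos_of_ne_zero (NeZero.ne N); omega :
      N - 1 + 1 = N) i.succ) :
    ∑ i, g (e i) = (∑ k, g k) - g 0 := by
  have h' : N - 1 + 1 = N := by have := Nat.pos_of_ne_zero (NeZero.ne N); omega
  have key : ∑ k : Fin N, g k = g 0 + ∑ i : Fin (N - 1), g (e i) := by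
    rw [← (finCongr h').sum_comp g, Fin.sum_univ_succ]
    have h0 : (Fin.cast h' (0 : Fin (N - 1 + 1))) = (0 : Fin N) := by
      simp [Fin.ext_iff]
    simp only [he, finCongr_apply, h0]
  rw [key]; abel

theorem stmt10 (m : ℕ) (hm : 2 ≤ m)
    (H : Matrix (Fin (4 * m)) (Fin (4 * m)) ℝ)
    (hHad : IsRealHadamard H)
    (hnorm : @IsNormalizedRH (4 * m) ⟨by omega⟩ H)
    (hsym : H.transpose = H)
    (ε : ℝ) (hε : ε = 1 ∨ ε = -1)
    (b : ℂ)
    (hb : b = -1 + 1 / (2 * m - 2) + ε * Complex.I * Real.sqrt (4 * m - 5) / (2 * m - 2))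
    (e : Fin (4 * m - 1) → Fin (4 * m))
    (he : ∀ i, e i = Fin.cast (by omega : 4 * m - 1 + 1 = 4 * m) i.succ) :
    IsCHadamard (Matrix.of fun i j : Fin (4 * m - 1) =>
      if i = j then (if H (e i) (e i) = 1 then -b else -1)
      else (if H (e i) (e j) = 1 then 1 else b)) := by
  haveI : NeZero (4 * m) := ⟨by omega⟩
  obtain ⟨hent, hHH⟩ := hHad
  obtain ⟨hrow0, hcol0⟩ := hnorm
  -- basic facts about b
  have hdR : (2 * (m : ℝ) - 2) ≠ 0 := by
    have : (2 : ℝ) ≤ (m : ℝ) := by exact_mod_cast hm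
    nlinarith
  have h45 : (0 : ℝ) ≤ 4 * (m : ℝ) - 5 := by
    have : (2 : ℝ) ≤ (m : ℝ) := by exact_mod_cast hm
    linarith
  set rR : ℝ := -1 + 1 / (2 * (m : ℝ) - 2) with hrR
  set sR : ℝ := ε * Real.sqrt (4 * (m : ℝ) - 5) / (2 * (m : ℝ) - 2) with hsR
  have hbr : b = (rR : ℂ) + (sR : ℂ) * Complex.I := by
    rw [hb, hrR, hsR]; push_cast; ring
  have hconj : (starRingEnd ℂ) b = (rR : ℂ) - (sR : ℂ) * Complex.I := by
    rw [hbr]; simp [Complex.conj_ofReal, Complex.conj_I]; ring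
  have hs2 : sR ^ 2 = (4 * (m : ℝ) - 5) / (2 * (m : ℝ) - 2) ^ 2 := by
    rw [hsR, div_pow, mul_pow, Real.sq_sqrt h45]
    rcases hε with rfl | rfl <;> norm_num
  have hrs : rR ^ 2 + sR ^ 2 = 1 := by
    have : (m : ℝ) - 1 ≠ 0 := fun h => hdR (by linarith)
    rw [hs2, hrR]; field_simp; ring
  have hbb : b * (starRingEnd ℂ) b = 1 := by
    rw [hconj, hbr]
    have : ((rR : ℂ) + sR * Complex.I) * ((rR : ℂ) - sR * Complex.I)
        = ((rR ^ 2 + sR ^ 2 : ℝ) : ℂ) := by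
      push_cast
      linear_combination (-(sR : ℂ) ^ 2) * Complex.I_sq
    rw [this, hrs]; norm_num
  have htC : (b + (starRingEnd ℂ) b) * (2 * (m : ℂ) - 2) = 2 * (3 - 2 * (m : ℂ)) := by
    rw [hconj, hbr]
    have h2 : ((2 : ℂ) * rR) * (2 * (m : ℂ) - 2) = 2 * (3 - 2 * (m : ℂ)) := by
      have hr : (2 * rR) * (2 * (m : ℝ) - 2) = 2 * (3 - 2 * (m : ℝ)) := by
        have : (m : ℝ) - 1 ≠ 0 := fun h => hdR (by linarith)
        rw [hrR]; field_simp; ring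
      calc ((2 : ℂ) * rR) * (2 * (m : ℂ) - 2) = (((2 * rR) * (2 * (m : ℝ) - 2) : ℝ) : ℂ) := by
            push_cast; ring
        _ = _ := by rw [hr]; push_cast; ring
    linear_combination h2
  have habs : ‖b‖ = 1 := by
    have h1 : Complex.normSq b = 1 := by
      have h := Complex.mul_conj b
      rw [hbb] at h
      exact_mod_cast h.symm
    rw [Complex.norm_def, h1, Real.sqrt_one]
  -- facts about H
  have horth : ∀ a c : Fin (4 * m), ∑ k, H a k * H c k = if a = c then ((4 * m : ℕ) : ℝ) else 0 := by
    intro a c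
    have h := congrFun (congrFun hHH a) c
    simp only [Matrix.mul_apply, Matrix.transpose_apply, Matrix.smul_apply, Matrix.one_apply,
      smul_eq_mul] at h
    rw [h]
    split_ifs <;> simp
  have hrowsum : ∀ a : Fin (4 * m), a ≠ 0 → ∑ k, H a k = 0 := by
    intro a ha
    have h := horth a 0
    rw [if_neg ha] at h
    rw [← h]
    exact Finset.sum_congr rfl fun k _ => by rw [hrow0 k, mul_one]
  have hval : ∀ i : Fin (4 * m - 1), (e i).val = i.val + 1 := fun i => by rw [he]; rfl
  have he0 : ∀ k : Fin (4 * m - 1), e k ≠ 0 := by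
    intro k h
    have := congrArg Fin.val h
    rw [hval] at this
    simp at this
  have hcard : ((4 * m - 1 : ℕ) : ℂ) = 4 * (m : ℂ) - 1 := by
    rw [Nat.cast_sub (by omega : 1 ≤ 4 * m)]; push_cast; ring
  set f : ℝ → ℂ := fun x => if x = 1 then 1 else b with hfdef
  have hf_mul : ∀ x y : ℝ, (x = 1 ∨ x = -1) → (y = 1 ∨ y = -1) →
      f x * (starRingEnd ℂ) (f y)
        = (2 + (b + (starRingEnd ℂ) b)) / 4
          + ((x * y : ℝ) : ℂ) * (2 - (b + (starRingEnd ℂ) b)) / 4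
          + (((y : ℝ) : ℂ) - ((x : ℝ) : ℂ)) * (b - (starRingEnd ℂ) b) / 4 := by
    intro x y hx hy
    have hne1 : ¬ ((-1 : ℝ) = 1) := by norm_num
    rcases hx with rfl | rfl <;> rcases hy with rfl | rfl <;>
        simp only [hfdef, if_pos rfl, if_neg hne1, _root_.map_one, Complex.ofReal_one,
          Complex.ofReal_neg, Complex.ofReal_mul, one_mul, mul_one, neg_neg, mul_neg, neg_mul]
    · ring
    · ring
    · ring
    · linear_combination hbb
  constructor
  · intro i j
    simp only [Matrix.of_apply]
    split_ifs <;> simp [habs]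
  · ext i j
    simp only [Matrix.mul_apply, Matrix.conjTranspose_apply, Matrix.smul_apply, Matrix.one_apply,
      Matrix.of_apply, Fintype.card_fin, smul_eq_mul, Complex.star_def]
    rcases eq_or_ne i j with rfl | hij
    · have h1 : ∀ k : Fin (4 * m - 1),
          (if i = k then (if H (e i) (e i) = 1 then -b else -1)
            else (if H (e i) (e k) = 1 then 1 else b)) *
          (starRingEnd ℂ) (if i = k then (if H (e i) (e i) = 1 then -b else -1)
            else (if H (e i) (e k) = 1 then 1 else b)) = 1 := by
        intro k
        split_ifs <;> first | exact hbb | simp [hbb]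
      rw [Finset.sum_congr rfl fun k _ => h1 k]
      simp [hcard]
    · rw [if_neg hij, mul_zero]
      have hene : e i ≠ e j := by
        intro h
        apply hij
        have := congrArg Fin.val h
        rw [hval, hval] at this
        exact Fin.ext (by omega)
      -- real sum facts
      have hR1 : ∑ k, H (e i) (e k) * H (e j) (e k) = -1 := by
        rw [aux_sum' (fun k => H (e i) k * H (e j) k) e he, horth, if_neg hene,
          hcol0 (e i), hcol0 (e j)]
        norm_num
      have hR2 : ∑ k, H (e i) (e k) = -1 := by
        rw [aux_sum' (fun k => H (e i) k) e he, hrowsum (e i) (he0 i), hcol0 (e i)]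
        norm_num
      have hR3 : ∑ k, H (e j) (e k) = -1 := by
        rw [aux_sum' (fun k => H (e j) k) e he, hrowsum (e j) (he0 j), hcol0 (e j)]
        norm_num
      -- the f-sum
      have hT : ∑ k, f (H (e i) (e k)) * (starRingEnd ℂ) (f (H (e j) (e k)))
          = (4 * (m : ℂ) - 1) * ((2 + (b + (starRingEnd ℂ) b)) / 4)
            + (-1) * ((2 - (b + (starRingEnd ℂ) b)) / 4) := by
        rw [Finset.sum_congr rfl fun k _ => hf_mul _ _ (hent _ _) (hent _ _)]
        rw [Finset.sum_add_distrib, Finset.sum_add_distrib]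
        have p1 : ∑ _k : Fin (4 * m - 1), (2 + (b + (starRingEnd ℂ) b)) / 4
            = (4 * (m : ℂ) - 1) * ((2 + (b + (starRingEnd ℂ) b)) / 4) := by
          rw [Finset.sum_const, Finset.card_univ, Fintype.card_fin, nsmul_eq_mul, hcard]
        have p2 : ∑ k, ((H (e i) (e k) * H (e j) (e k) : ℝ) : ℂ)
              * (2 - (b + (starRingEnd ℂ) b)) / 4
            = (-1) * ((2 - (b + (starRingEnd ℂ) b)) / 4) := by
          rw [← Finset.sum_div, ← Finset.sum_mul, ← Complex.ofReal_sum, hR1]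
          push_cast; ring
        have p3 : ∑ k, (((H (e j) (e k) : ℝ) : ℂ) - ((H (e i) (e k) : ℝ) : ℂ))
              * (b - (starRingEnd ℂ) b) / 4 = 0 := by
          rw [← Finset.sum_div, ← Finset.sum_mul, Finset.sum_sub_distrib,
            ← Complex.ofReal_sum, ← Complex.ofReal_sum, hR2, hR3]
          norm_num
        rw [p1, p2, p3, add_zero]
      -- split the main sum
      set Ci : ℂ := (if H (e i) (e i) = 1 then -b else -1)
          * (starRingEnd ℂ) (if H (e j) (e i) = 1 then 1 else b)
          - f (H (e i) (e i)) * (starRingEnd ℂ) (f (H (e j) (e i))) with hCi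
      set Cj : ℂ := (if H (e i) (e j) = 1 then 1 else b)
          * (starRingEnd ℂ) (if H (e j) (e j) = 1 then -b else -1)
          - f (H (e i) (e j)) * (starRingEnd ℂ) (f (H (e j) (e j))) with hCj
      have hsplit : ∀ k : Fin (4 * m - 1),
          (if i = k then (if H (e i) (e i) = 1 then -b else -1)
            else (if H (e i) (e k) = 1 then 1 else b)) *
          (starRingEnd ℂ) (if j = k then (if H (e j) (e j) = 1 then -b else -1)
            else (if H (e j) (e k) = 1 then 1 else b))
          = f (H (e i) (e k)) * (starRingEnd ℂ) (f (H (e j) (e k)))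
            + (if k = i then Ci else 0) + (if k = j then Cj else 0) := by
        intro k
        rcases eq_or_ne k i with rfl | hki
        · rw [if_pos rfl, if_neg (show ¬ j = k from fun h => hij h.symm), if_pos rfl,
            if_neg (show ¬ k = j from hij), add_zero, hCi]
          simp only [hfdef]
          ring
        · rcases eq_or_ne k j with rfl | hkj
          · rw [if_neg (show ¬ i = k from hij), if_pos rfl,
              if_neg (show ¬ k = i from fun h => hij h.symm), if_pos rfl, hCj]
            simp only [hfdef]
            ring
          · rw [if_neg (show ¬ i = k from fun h => hki h.symm),
              if_neg (show ¬ j = k from fun h => hkj h.symm), if_neg hki, if_neg hkj,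
              add_zero, add_zero, hfdef]
      rw [Finset.sum_congr rfl fun k _ => hsplit k, Finset.sum_add_distrib,
        Finset.sum_add_distrib, hT]
      have q1 : ∑ k : Fin (4 * m - 1), (if k = i then Ci else 0) = Ci := by
        simp
      have q2 : ∑ k : Fin (4 * m - 1), (if k = j then Cj else 0) = Cj := by
        simp
      rw [q1, q2]
      -- compute Ci and Cj
      have hHsym : H (e j) (e i) = H (e i) (e j) := congrFun (congrFun hsym (e i)) (e j)
      have hne1 : ¬ ((-1 : ℝ) = 1) := by norm_num
      have hCival : Ci = -(1 + b) * (starRingEnd ℂ) (f (H (e i) (e j))) := by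
        rw [hCi, hHsym]
        rcases hent (e i) (e i) with h | h <;> rw [h] <;>
          simp only [hfdef, eq_self_iff_true, if_true, if_pos rfl, if_neg hne1, map_neg, _root_.map_one, one_mul] <;>
          ring
      have hCjval : Cj = -(1 + (starRingEnd ℂ) b) * f (H (e i) (e j)) := by
        rw [hCj]
        rcases hent (e j) (e j) with h | h <;> rw [h] <;>
          simp only [hfdef, eq_self_iff_true, if_true, if_pos rfl, if_neg hne1, map_neg, _root_.map_one, one_mul] <;>
          ring
      rw [hCival, hCjval]
      rcases hent (e i) (e j) with h | h <;> rw [h] <;>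
        simp only [hfdef, eq_self_iff_true, if_true, if_pos rfl, if_neg hne1, _root_.map_one]
      · linear_combination (1 / 2 : ℂ) * htC
      · linear_combination (1 / 2 : ℂ) * htC - 2 * hbb
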